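/- Let ℓ ≥ 1 be an integer, n ≥ 1, and y ∈ ℤ^n with y_1 > y_2 > ⋯ > y_n. Construct a filling of boxes as follows: place the number 1 in position (1,1); having placed 1, …, i, place i+1 at the bottom of the leftmost column whose current bottom entry r satisfies y_r − y_{i+1} ≥ ℓ, and at the top of a new column to the right of all existing columns if no such column exists. Then the resulting filling is a standard Young tableau: the column lengths are weakly decreasing from left to right (so the occupied boxes form a Young diagram), and the entries increase strictly along each row and down each column. -/

import Mathlib

/-!
STATEMENT 17. Let `ℓ ≥ 1` be an integer, `n ≥ 1`, and `y ∈ ℤ^n` with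
`y_1 > y_2 > ⋯ > y_n`.  Construct a filling of boxes as follows: place the number
`1` in position `(1,1)`; having placed `1, …, i`, place `i+1` at the bottom of the
leftmost column whose current bottom entry `r` satisfies `y_r − y_{i+1} ≥ ℓ`, and
at the top of a new column to the right of all existing columns if no such column
exists.  Then the resulting filling is a standard Young tableau: the column
lengths are weakly decreasing from left to right (so the occupied boxes form a
Young diagram), the entries `1, …, n` are each used exactly once, and the entries
increase strictly along each row and down each column.
(The tableau is encoded as the list of its columns, each column a list of entries
from top to bottom.)
-/

namespace ShiInsertion

/-- Insert the entry `i` into the leftmost column of `cols` whose bottom entry `r`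
satisfies `y r − y i ≥ ℓ`, or into a new column at the right if there is none. -/
def step (ℓ : ℤ) (y : ℕ → ℤ) (i : ℕ) : List (List ℕ) → List (List ℕ)
  | [] => [[i]]
  | c :: rest =>
      if ℓ ≤ y (c.getLastD 0) - y i then (c ++ [i]) :: rest
      else c :: step ℓ y i rest

/-- Shi's insertion tableau of the point `y`, obtained by successively inserting
the entries `1, …, n`; it is given as the list of its columns (top to bottom). -/
def tableau (ℓ : ℤ) (y : ℕ → ℤ) (n : ℕ) : List (List ℕ) :=
  ((List.range n).map (· + 1)).foldl (fun t i => step ℓ y i t) []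

/-- A column is OK at stage `i`: nonempty, sorted, entries in `[1, i]`. -/
def ColOK (i : ℕ) (u : List ℕ) : Prop :=
  u ≠ [] ∧ u.Pairwise (· < ·) ∧ ∀ a ∈ u, 1 ≤ a ∧ a ≤ i

/-- Relation between adjacent columns: right is no longer, rows increase. -/
def ColRel (u v : List ℕ) : Prop :=
  v.length ≤ u.length ∧ ∀ (r a b : ℕ), u[r]? = some a → v[r]? = some b → a < b

def Good (ℓ : ℤ) (y : ℕ → ℤ) (i : ℕ) (t : List (List ℕ)) : Prop :=
  (∀ u ∈ t, ColOK i u) ∧ t.Chain' ColRel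

lemma colOK_mono {i j : ℕ} (h : i ≤ j) {u : List ℕ} (hu : ColOK i u) : ColOK j u :=
  ⟨hu.1, hu.2.1, fun a ha => ⟨(hu.2.2 a ha).1, le_trans (hu.2.2 a ha).2 h⟩⟩

lemma colOK_append {i : ℕ} {u : List ℕ} (hu : ColOK i u) : ColOK (i + 1) (u ++ [i + 1]) := by
  refine ⟨by simp, ?_, ?_⟩
  · rw [List.pairwise_append]
    exact ⟨hu.2.1, List.pairwise_singleton _ _,
      by simpa using fun a ha => Nat.lt_succ_of_le (hu.2.2 a ha).2⟩
  · intro a ha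
    rcases List.mem_append.1 ha with h | h
    · exact ⟨(hu.2.2 a h).1, le_trans (hu.2.2 a h).2 (Nat.le_succ _)⟩
    · simp at h; omega

/-- The bottom entry, as an indexed lookup. -/
lemma bottom_get {u : List ℕ} (hu : u ≠ []) :
    u[u.length - 1]? = some (u.getLastD 0) := by
  rw [List.getLastD_eq_getLast?, ← List.getLast?_eq_getElem?,
    List.getLast?_eq_getLast hu]
  rfl

lemma bottom_mem {u : List ℕ} (hu : u ≠ []) : u.getLastD 0 ∈ u :=
  List.mem_of_getElem? (bottom_get hu)

/-- Key lemma: if the test fails on `u` but passes on `v`, with `ColRel u v`,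
then `v` is strictly shorter than `u`. -/
lemma key {ℓ : ℤ} {y : ℕ → ℤ} {n i : ℕ}
    (hy : ∀ i j, 1 ≤ i → i < j → j ≤ n → y j < y i) (hin : i + 1 ≤ n)
    {u v : List ℕ} (hu : ColOK i u) (hv : ColOK i v) (hr : ColRel u v)
    (hfail : ¬ ℓ ≤ y (u.getLastD 0) - y (i + 1))
    (hpass : ℓ ≤ y (v.getLastD 0) - y (i + 1)) : v.length < u.length := by
  rcases Nat.lt_or_ge v.length u.length with h | h
  · exact h
  · exfalso
    have hlen : v.length = u.length := le_antisymm hr.1 h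
    have hune := hu.1
    have hvne := hv.1
    have hub := bottom_get hune
    have hvb := bottom_get hvne
    rw [hlen] at hvb
    have hab : u.getLastD 0 < v.getLastD 0 := hr.2 _ _ _ hub hvb
    have h1 : 1 ≤ u.getLastD 0 := (hu.2.2 _ (bottom_mem hune)).1
    have h2 : v.getLastD 0 ≤ i := (hv.2.2 _ (bottom_mem hvne)).2
    have := hy _ _ h1 hab (by omega)
    omega

lemma rel_extend {i : ℕ} {u v : List ℕ} (hu : ColOK i u) (hr : ColRel u v)
    (hlt : v.length < u.length) : ColRel u (v ++ [i + 1]) := by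
  refine ⟨by simpa using hlt, ?_⟩
  intro r a b ha hb
  rcases Nat.lt_or_ge r v.length with h | h
  · rw [List.getElem?_append_left h] at hb
    exact hr.2 r a b ha hb
  · have hr' : r < v.length + 1 := by
      have : r < (v ++ [i + 1]).length := (List.getElem?_eq_some_iff.1 hb).1
      simpa using this
    have hr0 : r = v.length := by omega
    rw [List.getElem?_append_right h] at hb
    simp [hr0] at hb
    have ham : a ∈ u := List.mem_of_getElem? ha
    have := (hu.2.2 a ham).2
    omega

lemma rel_new {i : ℕ} {u : List ℕ} (hu : ColOK i u) : ColRel u [i + 1] := by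
  refine ⟨by simpa using Nat.succ_le_of_lt (List.length_pos_iff.2 hu.1), ?_⟩
  intro r a b ha hb
  have hr' : r < 1 := by simpa using (List.getElem?_eq_some_iff.1 hb).1
  interval_cases r
  simp at hb
  have ham : a ∈ u := List.mem_of_getElem? ha
  have := (hu.2.2 a ham).2
  omega

lemma rel_grow_left {u v : List ℕ} (m : ℕ) (hr : ColRel u v) : ColRel (u ++ [m]) v := by
  refine ⟨le_trans hr.1 (by simp), ?_⟩
  intro r a b ha hb
  have hlt : r < v.length := (List.getElem?_eq_some_iff.1 hb).1
  rw [List.getElem?_append_left (lt_of_lt_of_le hlt hr.1)] at ha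
  exact hr.2 r a b ha hb

lemma step_good {ℓ : ℤ} {y : ℕ → ℤ} {n : ℕ}
    (hy : ∀ i j, 1 ≤ i → i < j → j ≤ n → y j < y i) {i : ℕ} (hin : i + 1 ≤ n) :
    ∀ t : List (List ℕ), Good ℓ y i t → Good ℓ y (i + 1) (step ℓ y (i + 1) t) := by
  intro t
  induction t with
  | nil =>
    intro _
    refine ⟨?_, by simp [step, List.Chain']⟩
    intro u hu
    simp [step] at hu
    subst hu
    exact ⟨by simp, List.pairwise_singleton _ _, by intro a ha; simp at ha; omega⟩
  | cons c rest ih =>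
    intro h
    obtain ⟨hcols, hchain⟩ := h
    have hc : ColOK i c := hcols c (by simp)
    have hrest : Good ℓ y i rest :=
      ⟨fun d hd => hcols d (by simp [hd]), (List.isChain_cons.1 hchain).2⟩
    rw [step]
    split
    · -- test passes on c
      constructor
      · intro d hd
        rcases List.mem_cons.1 hd with rfl | hd
        · exact colOK_append hc
        · exact colOK_mono (Nat.le_succ _) (hrest.1 d hd)
      · simp only [List.Chain', List.isChain_cons]
        refine ⟨?_, hrest.2⟩
        intro d hd
        exact rel_grow_left _ ((List.isChain_cons.1 hchain).1 d hd)
    · -- test fails on c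
      rename_i hfail
      have hgood := ih hrest
      constructor
      · intro d hd
        rcases List.mem_cons.1 hd with rfl | hd
        · exact colOK_mono (Nat.le_succ _) hc
        · exact hgood.1 d hd
      · simp only [List.Chain', List.isChain_cons]
        refine ⟨?_, hgood.2⟩
        intro d hd
        match rest, hd with
        | [], hd =>
          simp [step] at hd
          subst hd
          exact rel_new hc
        | e :: rest', hd =>
          have hrel_ce : ColRel c e := (List.isChain_cons.1 hchain).1 e rfl
          have he : ColOK i e := hrest.1 e (by simp)
          rw [step] at hd
          split at hd
          · rename_i hpass
            simp at hd
            subst hd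
            exact rel_extend hc hrel_ce (key hy hin hc he hrel_ce hfail hpass)
          · simp at hd
            subst hd
            exact hrel_ce

lemma step_flatten (ℓ : ℤ) (y : ℕ → ℤ) (m : ℕ) (t : List (List ℕ)) :
    (step ℓ y m t).flatten.Perm (m :: t.flatten) := by
  induction t with
  | nil => simp [step]
  | cons c rest ih =>
    rw [step]
    split
    · simpa using (List.perm_middle (a := m) (l₁ := c) (l₂ := rest.flatten))
    · simp only [List.flatten_cons]
      exact (List.Perm.append_left c ih).trans List.perm_middle

lemma tableau_succ (ℓ : ℤ) (y : ℕ → ℤ) (i : ℕ) :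
    tableau ℓ y (i + 1) = step ℓ y (i + 1) (tableau ℓ y i) := by
  simp [tableau, List.range_succ]

lemma tableau_good {ℓ : ℤ} {y : ℕ → ℤ} {n : ℕ}
    (hy : ∀ i j, 1 ≤ i → i < j → j ≤ n → y j < y i) :
    ∀ i, i ≤ n → Good ℓ y i (tableau ℓ y i) := by
  intro i
  induction i with
  | zero => intro _; exact ⟨by simp [tableau], by simp [tableau, List.Chain']⟩
  | succ i ih =>
    intro hin
    rw [tableau_succ]
    exact step_good hy hin _ (ih (by omega))

lemma tableau_perm (ℓ : ℤ) (y : ℕ → ℤ) :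
    ∀ i, (tableau ℓ y i).flatten.Perm ((List.range i).map (· + 1)) := by
  intro i
  induction i with
  | zero => simp [tableau]
  | succ i ih =>
    rw [tableau_succ]
    have h1 := step_flatten ℓ y (i + 1) (tableau ℓ y i)
    have h2 := ih.cons (i + 1)
    have h3 : ((i + 1) :: (List.range i).map (· + 1)).Perm
        ((List.range i).map (· + 1) ++ [i + 1]) := by
      simpa using
        (List.perm_middle (a := i + 1) (l₁ := (List.range i).map (· + 1)) (l₂ := [])).symm
    have h4 : ((List.range i).map (· + 1) ++ [i + 1]) =
        (List.range (i + 1)).map (· + 1) := by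
      simp [List.range_succ]
    exact ((h1.trans h2).trans h3).trans (h4 ▸ List.Perm.refl _)


end ShiInsertion

theorem shi_insertion_standard_tableau
    (ℓ : ℤ) (hℓ : 1 ≤ ℓ) (n : ℕ) (hn : 1 ≤ n)
    (y : ℕ → ℤ) (hy : ∀ i j, 1 ≤ i → i < j → j ≤ n → y j < y i) :
    -- the column lengths weakly decrease from left to right,
    -- so the occupied boxes form a Young diagram
    (∀ j : ℕ, ((ShiInsertion.tableau ℓ y n).getD (j + 1) []).length ≤
        ((ShiInsertion.tableau ℓ y n).getD j []).length) ∧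
    -- the entries are `1, …, n`, each used exactly once
    (ShiInsertion.tableau ℓ y n).flatten.Perm ((List.range n).map (· + 1)) ∧
    -- the entries strictly increase down each column
    (∀ c ∈ ShiInsertion.tableau ℓ y n, c.Pairwise (· < ·)) ∧
    -- the entries strictly increase along each row
    (∀ j k r : ℕ, j < k →
        ∀ a b : ℕ,
          ((ShiInsertion.tableau ℓ y n).getD j [])[r]? = some a →
          ((ShiInsertion.tableau ℓ y n).getD k [])[r]? = some b →
          a < b) := by
  obtain ⟨hcols, hchain⟩ := ShiInsertion.tableau_good hy n le_rfl
  set t := ShiInsertion.tableau ℓ y n with ht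
  have hrel : ∀ j : ℕ, j + 1 < t.length →
      ShiInsertion.ColRel (t.getD j []) (t.getD (j + 1) []) := by
    intro j hj
    have h1 : j < t.length := by omega
    rw [List.getD_eq_getElem _ _ h1, List.getD_eq_getElem _ _ hj]
    have := List.isChain_iff_getElem.1 hchain j (by omega)
    simpa [List.get_eq_getElem] using this
  refine ⟨?_, ShiInsertion.tableau_perm ℓ y n, fun u hu => (hcols u hu).2.1, ?_⟩
  · intro j
    rcases Nat.lt_or_ge (j + 1) t.length with hj | hj
    · exact (hrel j hj).1
    · rw [List.getD_eq_getElem?_getD, List.getElem?_eq_none hj]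
      simp
  · have main : ∀ (k r b : ℕ), (t.getD k [])[r]? = some b →
        ∀ j, j < k → ∃ a, (t.getD j [])[r]? = some a ∧ a < b := by
      intro k
      induction k with
      | zero => intro r b _ j hj; omega
      | succ k ih =>
        intro r b hb j hj
        have hne : (t.getD (k + 1) []) ≠ [] := by
          intro h; rw [h] at hb; simp at hb
        have hlen : k + 1 < t.length := by
          by_contra h
          rw [List.getD_eq_getElem?_getD, List.getElem?_eq_none (by omega)] at hne
          simp at hne
        have hrelk := hrel k hlen
        have hrb : r < (t.getD (k + 1) []).length := (List.getElem?_eq_some_iff.1 hb).1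
        have hra : r < (t.getD k []).length := lt_of_lt_of_le hrb hrelk.1
        obtain ⟨a, ha⟩ : ∃ a, (t.getD k [])[r]? = some a :=
          ⟨(t.getD k [])[r], List.getElem?_eq_some_iff.2 ⟨hra, rfl⟩⟩
        have hab : a < b := hrelk.2 r a b ha hb
        rcases Nat.lt_or_ge j k with hjk | hjk
        · obtain ⟨a', ha', haa'⟩ := ih r a ha j hjk
          exact ⟨a', ha', lt_trans haa' hab⟩
        · have hjeq : j = k := by omega
          subst hjeq
          exact ⟨a, ha, hab⟩
    intro j k r hjk a b ha hb
    obtain ⟨a', ha', hlt⟩ := main k r b hb j hjk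
    rw [ha] at ha'
    injection ha' with h'
    omega
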